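/- arXiv:2511.15928 — 4 statements merged into one kernel-verified Lean document; each statement's English description precedes it below -/
import Mathlib

section
/- Let b > 0 and y > 0 be real. Then the integral of y^z/z² over the vertical line Re(z) = b (i.e., ∫_{b−i∞}^{b+i∞} y^z/z² dz) equals 2πi·log y if y > 1, and equals 0 if 0 < y ≤ 1. -/
open MeasureTheory Set Complex Filter Real

lemma keyInt {c : ℂ} (hc : 0 < c.re) :
    IntegrableOn (fun s : ℝ => (s : ℂ) * Complex.exp (-(c * s))) (Ioi (0:ℝ)) := by
  have hreal : IntegrableOn (fun s : ℝ => s * Real.exp (-(c.re * s))) (Ioi (0:ℝ)) := by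
    have := integrableOn_rpow_mul_exp_neg_mul_rpow (p := 1) (s := 1) (b := c.re)
      (by norm_num) one_pos hc
    refine this.congr_fun (fun x hx => ?_) measurableSet_Ioi
    simp [Real.rpow_one]
  refine Integrable.mono' hreal ?_ ?_
  · exact (Complex.continuous_ofReal.mul (Complex.continuous_exp.comp
      (by fun_prop))).aestronglyMeasurable.restrict
  · filter_upwards [ae_restrict_mem measurableSet_Ioi] with s hs
    rw [norm_mul, Complex.norm_exp, Complex.norm_real, Real.norm_eq_abs,
      abs_of_pos hs]
    simp [mul_comm]

lemma tendsto_cexp_neg {c : ℂ} (hc : 0 < c.re) :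
    Tendsto (fun s : ℝ => Complex.exp (-(c * s))) atTop (nhds 0) := by
  rw [tendsto_zero_iff_norm_tendsto_zero]
  have : (fun s : ℝ => ‖Complex.exp (-(c * s))‖) = fun s : ℝ => Real.exp (-(c.re * s)) := by
    ext s
    rw [Complex.norm_exp]
    simp
  rw [this]
  have h := (Real.tendsto_exp_neg_atTop_nhds_zero).comp
    (tendsto_const_mul_atTop_of_pos hc |>.mpr tendsto_id)
  exact h.congr fun s => by simp [Function.comp]

lemma tendsto_mul_cexp_neg {c : ℂ} (hc : 0 < c.re) :
    Tendsto (fun s : ℝ => (s : ℂ) * Complex.exp (-(c * s))) atTop (nhds 0) := by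
  rw [tendsto_zero_iff_norm_tendsto_zero]
  have key : Tendsto (fun s : ℝ => s * Real.exp (-(c.re * s))) atTop (nhds 0) := by
    have h1 : Tendsto (fun x : ℝ => x ^ 1 * Real.exp (-x)) atTop (nhds 0) :=
      Real.tendsto_pow_mul_exp_neg_atTop_nhds_zero 1
    have h2 : Tendsto (fun s : ℝ => c.re * s) atTop atTop :=
      tendsto_const_mul_atTop_of_pos hc |>.mpr tendsto_id
    have := ((h1.comp h2).const_mul (c.re)⁻¹)
    simp only [Function.comp, pow_one, mul_zero] at this
    refine this.congr' ?_
    filter_upwards [eventually_gt_atTop 0] with s hs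
    field_simp
  have := key.abs
  rw [abs_zero] at this
  refine this.congr' ?_
  filter_upwards [eventually_gt_atTop 0] with s hs
  rw [abs_mul, norm_mul, Complex.norm_exp, Complex.norm_real, Real.norm_eq_abs,
    Real.abs_exp]
  congr 1
  simp

lemma keyVal {c : ℂ} (hc : 0 < c.re) :
    ∫ s in Ioi (0:ℝ), (s : ℂ) * Complex.exp (-(c * s)) = 1 / c ^ 2 := by
  have hc0 : c ≠ 0 := fun h => by simp [h] at hc
  have hD : ∀ x ∈ Ioi (0:ℝ), HasDerivAt
      (fun s : ℝ => -((s / c + 1 / c ^ 2) * Complex.exp (-(c * s))))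
      ((x : ℂ) * Complex.exp (-(c * x))) x := by
    intro x _
    have hre : HasDerivAt (fun s : ℝ => (s : ℂ)) 1 x := by
      simpa using (hasDerivAt_id x).ofReal_comp
    have hexp : HasDerivAt (fun s : ℝ => Complex.exp (-(c * s)))
        (-c * Complex.exp (-(c * x))) x := by
      have := ((hre.const_mul c).neg).cexp
      simpa [mul_comm] using this
    have hlin : HasDerivAt (fun s : ℝ => ((s : ℂ) / c + 1 / c ^ 2)) (1 / c) x := by
      have := (hre.div_const c).add_const (1 / c ^ 2)
      simpa [one_div] using this
    have := (hlin.mul hexp).neg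
    convert this using 1
    · rfl
    · rfl
    field_simp
    ring
  have htend : Tendsto (fun s : ℝ => -((s / c + 1 / c ^ 2) * Complex.exp (-(c * s))))
      atTop (nhds 0) := by
    have h1 := (tendsto_mul_cexp_neg hc).div_const c
    have h2 := (tendsto_cexp_neg hc).const_mul (1 / c ^ 2)
    have := ((h1.add h2).neg)
    simp only [zero_div, mul_zero, add_zero, neg_zero, zero_add] at this
    refine this.congr fun s => ?_
    ring
  have := integral_Ioi_of_hasDerivAt_of_tendsto (f := fun s : ℝ =>
      -((s / c + 1 / c ^ 2) * Complex.exp (-(c * s)))) ?_ hD (keyInt hc) htend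
  · rw [this]
    simp
  · apply Continuous.continuousWithinAt
    fun_prop

open scoped FourierTransform

noncomputable def gfun (b : ℝ) : ℝ → ℂ :=
  fun s => ((max s 0 : ℝ) : ℂ) * Complex.exp (-((b : ℂ) * s))

lemma gcont (b : ℝ) : Continuous (gfun b) := by
  unfold gfun; fun_prop

lemma gint {b : ℝ} (hb : 0 < b) : Integrable (gfun b) := by
  rw [← integrableOn_univ, ← Iic_union_Ioi (a := (0:ℝ))]
  apply IntegrableOn.union
  · have : EqOn (gfun b) 0 (Iic 0) := by
      intro s hs
      simp [gfun, max_eq_right (mem_Iic.mp hs)]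
    exact (integrableOn_zero).congr_fun this.symm measurableSet_Iic
  · refine (keyInt (c := (b:ℂ)) (by simpa using hb)).congr_fun ?_ measurableSet_Ioi
    intro s hs
    simp [gfun, max_eq_left (le_of_lt (mem_Ioi.mp hs))]

lemma fourier_g {b : ℝ} (hb : 0 < b) (ξ : ℝ) :
    𝓕 (gfun b) ξ = 1 / ((b : ℂ) + 2 * Real.pi * ξ * Complex.I) ^ 2 := by
  rw [Real.fourier_real_eq_integral_exp_smul]
  have hint : Integrable (fun v : ℝ =>
      Complex.exp (↑(-2 * Real.pi * v * ξ) * Complex.I) • gfun b v) := by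
    apply (gint hb).bdd_mul (c := 1)
    · exact (Complex.continuous_exp.comp (by fun_prop)).aestronglyMeasurable
    · refine Filter.Eventually.of_forall fun v => ?_
      rw [Complex.norm_exp]
      simp
  rw [← integral_add_compl measurableSet_Iic hint, compl_Iic]
  have h1 : ∫ v in Iic (0:ℝ), Complex.exp (↑(-2 * Real.pi * v * ξ) * Complex.I) • gfun b v = 0 := by
    apply setIntegral_eq_zero_of_forall_eq_zero
    intro v hv
    simp [gfun, max_eq_right (mem_Iic.mp hv)]
  rw [h1, zero_add]
  have h2 : ∀ v ∈ Ioi (0:ℝ), Complex.exp (↑(-2 * Real.pi * v * ξ) * Complex.I) • gfun b v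
      = (v : ℂ) * Complex.exp (-(((b : ℂ) + 2 * Real.pi * ξ * Complex.I) * v)) := by
    intro v hv
    rw [smul_eq_mul, gfun, max_eq_left (le_of_lt (mem_Ioi.mp hv))]
    rw [mul_comm, mul_assoc, ← Complex.exp_add]
    push_cast
    ring_nf
  rw [setIntegral_congr_fun measurableSet_Ioi h2,
    keyVal (c := (b : ℂ) + 2 * Real.pi * ξ * Complex.I) (by simp [hb])]

lemma norm_inv_sq_le {b : ℝ} (hb : 0 < b) (c : ℝ) (ξ : ℝ) (hc : c ≠ 0) :
    ‖1 / ((b : ℂ) + c * ξ * Complex.I) ^ 2‖ ≤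
      ((b ^ 2)⁻¹ + (c ^ 2)⁻¹) * (1 + ξ ^ 2)⁻¹ := by
  have hz : ‖(b : ℂ) + c * ξ * Complex.I‖ ^ 2 = b ^ 2 + (c * ξ) ^ 2 := by
    rw [Complex.sq_norm, Complex.normSq_apply]
    simp
    ring
  rw [norm_div, norm_one, norm_pow, hz]
  have hre : ((b ^ 2)⁻¹ + (c ^ 2)⁻¹) * (1 + ξ ^ 2)⁻¹ = ((b ^ 2)⁻¹ + (c ^ 2)⁻¹) / (1 + ξ ^ 2) := by
    ring
  rw [hre, div_le_div_iff₀ (by positivity) (by positivity)]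
  have h1 : (0:ℝ) < b ^ 2 := by positivity
  have h2 : (0:ℝ) < c ^ 2 := by positivity
  have e1 : (b ^ 2)⁻¹ * b ^ 2 = 1 := inv_mul_cancel₀ h1.ne'
  have e2 : (c ^ 2)⁻¹ * (c * ξ) ^ 2 = ξ ^ 2 := by
    rw [mul_pow, ← mul_assoc, inv_mul_cancel₀ h2.ne', one_mul]
  nlinarith [sq_nonneg ξ, mul_nonneg (inv_nonneg.mpr h1.le) (sq_nonneg (c*ξ)), mul_nonneg (inv_nonneg.mpr h2.le) (sq_nonneg b)]

lemma fourier_g_int {b : ℝ} (hb : 0 < b) : Integrable (𝓕 (gfun b)) := by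
  have heq : 𝓕 (gfun b) = fun ξ : ℝ => 1 / ((b : ℂ) + 2 * Real.pi * ξ * Complex.I) ^ 2 := by
    ext ξ; exact fourier_g hb ξ
  rw [heq]
  have hc : (2 * Real.pi) ≠ 0 := by positivity
  apply Integrable.mono' ((integrable_inv_one_add_sq).const_mul ((b ^ 2)⁻¹ + ((2 * Real.pi) ^ 2)⁻¹))
  · apply Continuous.aestronglyMeasurable
    apply Continuous.div continuous_const (by fun_prop)
    intro ξ
    intro h
    have : ((b : ℂ) + 2 * Real.pi * ξ * Complex.I).re = 0 := by
      rw [show (b : ℂ) + 2 * Real.pi * ξ * Complex.I = 0 from by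
        have := pow_eq_zero_iff (n := 2) (by norm_num) |>.mp h; exact this]
      simp
    simp at this
    exact absurd this hb.ne'
  · refine Filter.Eventually.of_forall fun ξ => ?_
    have := norm_inv_sq_le hb (2 * Real.pi) ξ hc
    push_cast at this ⊢
    convert this using 2

lemma inversion {b : ℝ} (hb : 0 < b) (u : ℝ) :
    ∫ ξ : ℝ, Complex.exp (((2 * Real.pi * (ξ * u) : ℝ) : ℂ) * Complex.I) •
      (1 / ((b : ℂ) + 2 * Real.pi * ξ * Complex.I) ^ 2) = gfun b u := by
  have h := (gint hb).fourierInv_fourier_eq (fourier_g_int hb) ((gcont b).continuousAt (x := u))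
  rw [Real.fourierInv_eq'] at h
  rw [← h]
  congr 1
  ext ξ
  rw [fourier_g hb ξ]
  norm_num [RCLike.inner_apply, conj_trivial]
  left; ring_nf

lemma scaled_integral {b u : ℝ} (hb : 0 < b) :
    ∫ t : ℝ, Complex.exp (((u * t : ℝ) : ℂ) * Complex.I) / ((b : ℂ) + t * Complex.I) ^ 2
      = (2 * Real.pi) • gfun b u := by
  set F : ℝ → ℂ := fun t =>
    Complex.exp (((u * t : ℝ) : ℂ) * Complex.I) / ((b : ℂ) + t * Complex.I) ^ 2 with hF
  have hcomp := MeasureTheory.Measure.integral_comp_mul_left F (2 * Real.pi)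
  have hpi : (0:ℝ) < 2 * Real.pi := by positivity
  have habs : |(2 * Real.pi)⁻¹| = (2 * Real.pi)⁻¹ := abs_of_pos (by positivity)
  rw [habs] at hcomp
  have h2 : ∫ ξ : ℝ, F (2 * Real.pi * ξ) = gfun b u := by
    rw [← inversion hb u]
    congr 1
    ext ξ
    rw [hF]
    simp only [smul_eq_mul]
    rw [div_eq_mul_one_div]
    congr 2
    · push_cast; ring
    · push_cast; ring
  rw [h2, eq_comm, inv_smul_eq_iff₀ hpi.ne'] at hcomp
  exact hcomp

open MeasureTheory in
theorem stmt_2 (b y : ℝ) (hb : 0 < b) (hy : 0 < y) :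
    Integrable (fun t : ℝ => (y : ℂ) ^ ((b : ℂ) + t * Complex.I) /
        ((b : ℂ) + t * Complex.I) ^ 2) ∧
    Complex.I * ∫ t : ℝ, (y : ℂ) ^ ((b : ℂ) + t * Complex.I) /
        ((b : ℂ) + t * Complex.I) ^ 2 =
      if 1 < y then 2 * Real.pi * Complex.I * Real.log y else 0 := by
  set u : ℝ := Real.log y with hu
  have hrw : (fun t : ℝ => (y : ℂ) ^ ((b : ℂ) + t * Complex.I) / ((b : ℂ) + t * Complex.I) ^ 2)
      = fun t : ℝ => ((y ^ b : ℝ) : ℂ) *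
        (Complex.exp (((u * t : ℝ) : ℂ) * Complex.I) / ((b : ℂ) + t * Complex.I) ^ 2) := by
    ext t
    have hy0 : (y : ℂ) ≠ 0 := Complex.ofReal_ne_zero.mpr hy.ne'
    rw [Complex.cpow_def_of_ne_zero hy0, ← Complex.ofReal_log hy.le]
    rw [show ((Real.log y : ℝ) : ℂ) * ((b : ℂ) + t * Complex.I)
        = ((Real.log y * b : ℝ) : ℂ) + ((Real.log y * t : ℝ) : ℂ) * Complex.I from by
      push_cast; ring]
    rw [Complex.exp_add, ← Complex.ofReal_exp, ← Real.rpow_def_of_pos hy]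
    rw [mul_div_assoc]
  have hdenom : ∀ t : ℝ, ((b : ℂ) + t * Complex.I) ^ 2 ≠ 0 := by
    intro t h
    have h0 : (b : ℂ) + t * Complex.I = 0 := pow_eq_zero_iff (n := 2) (by norm_num) |>.mp h
    have : ((b : ℂ) + t * Complex.I).re = 0 := by rw [h0]; simp
    simp at this
    exact absurd this hb.ne'
  have hInt2 : Integrable (fun t : ℝ =>
      Complex.exp (((u * t : ℝ) : ℂ) * Complex.I) / ((b : ℂ) + t * Complex.I) ^ 2) := by
    apply Integrable.mono' ((integrable_inv_one_add_sq).const_mul ((b ^ 2)⁻¹ + 1))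
    · apply Continuous.aestronglyMeasurable
      apply Continuous.div (by fun_prop) (by fun_prop) hdenom
    · refine Filter.Eventually.of_forall fun t => ?_
      have hn : ‖Complex.exp (((u * t : ℝ) : ℂ) * Complex.I) / ((b : ℂ) + t * Complex.I) ^ 2‖
          = ‖1 / ((b : ℂ) + ((1:ℝ) : ℂ) * t * Complex.I) ^ 2‖ := by
        rw [norm_div, norm_div, norm_one, Complex.norm_exp]
        norm_num
      rw [hn]
      have := norm_inv_sq_le hb 1 t one_ne_zero
      simpa using this
  have hInt : Integrable (fun t : ℝ => (y : ℂ) ^ ((b : ℂ) + t * Complex.I) /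
      ((b : ℂ) + t * Complex.I) ^ 2) := by
    rw [hrw]
    exact hInt2.const_mul _
  refine ⟨hInt, ?_⟩
  rw [hrw, integral_const_mul, scaled_integral hb]
  by_cases hy1 : 1 < y
  · rw [if_pos hy1]
    have hu0 : 0 < u := Real.log_pos hy1
    have hgf : gfun b u = ((u : ℝ) : ℂ) * ((Real.exp (-(b * u)) : ℝ) : ℂ) := by
      rw [gfun, max_eq_left hu0.le]
      congr 1
      rw [Complex.ofReal_exp]
      congr 1
      push_cast
      ring
    rw [hgf]
    have h1 : ((y ^ b : ℝ) : ℂ) * ((Real.exp (-(b * u)) : ℝ) : ℂ) = 1 := by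
      rw [← Complex.ofReal_mul, Real.rpow_def_of_pos hy, ← Real.exp_add]
      norm_num [hu]
      ring_nf
      simp
    rw [Complex.real_smul]
    push_cast [-Complex.ofReal_exp]
    linear_combination (2 * (Real.pi : ℂ) * Complex.I * (u : ℂ)) * h1
  · rw [if_neg hy1]
    have hu0 : u ≤ 0 := Real.log_nonpos hy.le (not_lt.mp hy1)
    have hgf : gfun b u = 0 := by
      rw [gfun, max_eq_right hu0]
      simp
    rw [hgf]
    simp
end

section
/- Fix K₀ > 0. There is a constant C = C(K₀) such that for all complex α with |α| ≤ K₀, all integers N ≥ 0, and all integers j with 0 ≤ j ≤ N, one has 1/|Γ(α − j)| ≤ C·N!·(N+1)^{K₀}. -/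
open Finset

private lemma gamma_shift : ∀ (j : ℕ) (α : ℂ), (∀ m : ℕ, α - j ≠ -m) →
    Complex.Gamma α = (∏ k ∈ Finset.range j, (α - ((k : ℂ) + 1))) * Complex.Gamma (α - j) := by
  intro j
  induction j with
  | zero => intro α h; simp
  | succ j ih =>
    intro α h
    have h' : ∀ m : ℕ, α - j ≠ -m := by
      intro m hm
      apply h (m + 1)
      push_cast
      rw [sub_eq_iff_eq_add] at hm
      rw [sub_eq_iff_eq_add, hm]; ring
    have hs : (α - ((j : ℂ) + 1)) ≠ 0 := by
      have h0 := h 0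
      push_cast at h0
      intro hz
      apply h0
      rw [sub_eq_zero] at hz
      rw [hz]; ring
    have key : Complex.Gamma (α - j) = (α - ((j : ℂ) + 1)) * Complex.Gamma (α - ((j : ℂ) + 1)) := by
      have h1 := Complex.Gamma_add_one (α - ((j : ℂ) + 1)) hs
      rw [show α - ((j : ℂ) + 1) + 1 = α - j by ring] at h1
      exact h1
    rw [ih α h', Finset.prod_range_succ, key]
    push_cast
    ring

private lemma prod_boundX (K₀ : ℝ) (hK₀ : 0 < K₀) (N : ℕ) :
    (∏ k ∈ Finset.range N, (K₀ + ((k : ℝ) + 1))) ≤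
      (N.factorial : ℝ) * Real.exp K₀ * ((N : ℝ) + 1) ^ K₀ := by
  have h1 : (∏ k ∈ Finset.range N, (K₀ + ((k : ℝ) + 1))) =
      (N.factorial : ℝ) * ∏ k ∈ Finset.range N, (1 + K₀ / ((k : ℝ) + 1)) := by
    rw [← Finset.prod_range_add_one_eq_factorial, Nat.cast_prod, ← Finset.prod_mul_distrib]
    apply Finset.prod_congr rfl
    intro k _
    have hk : ((k : ℝ) + 1) ≠ 0 := by positivity
    push_cast
    field_simp
    ring
  rw [h1]
  have h2 : (∏ k ∈ Finset.range N, (1 + K₀ / ((k : ℝ) + 1))) ≤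
      Real.exp (K₀ * (harmonic N : ℝ)) := by
    calc (∏ k ∈ Finset.range N, (1 + K₀ / ((k : ℝ) + 1)))
        ≤ ∏ k ∈ Finset.range N, Real.exp (K₀ / ((k : ℝ) + 1)) := by
          apply Finset.prod_le_prod
          · intro i _; positivity
          · intro i _
            have := Real.add_one_le_exp (K₀ / ((i : ℝ) + 1))
            linarith
      _ = Real.exp (∑ k ∈ Finset.range N, K₀ / ((k : ℝ) + 1)) := (Real.exp_sum _ _).symm
      _ = Real.exp (K₀ * (harmonic N : ℝ)) := by
          congr 1
          rw [harmonic]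
          push_cast
          rw [Finset.mul_sum]
          apply Finset.sum_congr rfl
          intro k _
          rw [div_eq_mul_inv]
  have h3 : Real.exp (K₀ * (harmonic N : ℝ)) ≤ Real.exp K₀ * ((N : ℝ) + 1) ^ K₀ := by
    have hh : (harmonic N : ℝ) ≤ 1 + Real.log ((N : ℝ) + 1) := by
      refine (harmonic_le_one_add_log N).trans ?_
      have : Real.log (N : ℝ) ≤ Real.log ((N : ℝ) + 1) := by
        rcases Nat.eq_zero_or_pos N with h | h
        · simp [h]
        · exact Real.log_le_log (by exact_mod_cast h) (by linarith)
      linarith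
    calc Real.exp (K₀ * (harmonic N : ℝ))
        ≤ Real.exp (K₀ * (1 + Real.log ((N : ℝ) + 1))) := by
          apply Real.exp_le_exp.mpr
          exact mul_le_mul_of_nonneg_left hh hK₀.le
      _ = Real.exp K₀ * ((N : ℝ) + 1) ^ K₀ := by
          rw [mul_add, Real.exp_add, mul_one]
          congr 1
          rw [Real.rpow_def_of_pos (by positivity)]
          ring_nf
  calc (N.factorial : ℝ) * ∏ k ∈ Finset.range N, (1 + K₀ / ((k : ℝ) + 1))
      ≤ (N.factorial : ℝ) * (Real.exp K₀ * ((N : ℝ) + 1) ^ K₀) := by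
        apply mul_le_mul_of_nonneg_left (h2.trans h3) (by positivity)
    _ = (N.factorial : ℝ) * Real.exp K₀ * ((N : ℝ) + 1) ^ K₀ := by ring

theorem stmt_10 (K₀ : ℝ) (hK₀ : 0 < K₀) :
    ∃ C : ℝ, 0 < C ∧ ∀ α : ℂ, ‖α‖ ≤ K₀ → ∀ N : ℕ, ∀ j : ℕ, j ≤ N →
      1 / ‖Complex.Gamma (α - j)‖ ≤
        C * N.factorial * ((N : ℝ) + 1) ^ K₀ := by
  have hcont : ContinuousOn (fun α : ℂ => ‖Complex.Gamma α‖⁻¹)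
      (Metric.closedBall 0 K₀) := by
    have : Continuous (fun α : ℂ => ‖(Complex.Gamma α)⁻¹‖) :=
      continuous_norm.comp Complex.differentiable_one_div_Gamma.continuous
    simpa [norm_inv] using this.continuousOn
  obtain ⟨M, hM⟩ := (isCompact_closedBall (0 : ℂ) K₀).exists_bound_of_continuousOn hcont
  refine ⟨(max M 1) * Real.exp K₀, by positivity, ?_⟩
  intro α hα N j hjN
  by_cases hΓ : Complex.Gamma (α - j) = 0
  · rw [hΓ]
    simp only [norm_zero, div_zero]
    positivity
  · have hne : ∀ m : ℕ, α - j ≠ -m := by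
      intro m hm
      exact hΓ (hm ▸ Complex.Gamma_neg_nat_eq_zero m)
    have hkey := gamma_shift j α hne
    have habs : ‖Complex.Gamma α‖ =
        (∏ k ∈ Finset.range j, ‖α - ((k : ℂ) + 1)‖) *
          ‖Complex.Gamma (α - j)‖ := by
      rw [hkey, norm_mul, norm_prod]
    have hΓj : ‖Complex.Gamma (α - j)‖ ≠ 0 := by
      intro h0
      exact hΓ (by rwa [norm_eq_zero] at h0)
    have heq : 1 / ‖Complex.Gamma (α - j)‖ =
        (∏ k ∈ Finset.range j, ‖α - ((k : ℂ) + 1)‖) *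
          (‖Complex.Gamma α‖)⁻¹ := by
      rw [habs, mul_inv, one_div]
      rcases eq_or_ne (∏ k ∈ Finset.range j, ‖α - ((k : ℂ) + 1)‖) 0 with h0 | h0
      · exfalso
        obtain ⟨k, hk, hk0⟩ := Finset.prod_eq_zero_iff.mp h0
        rw [norm_eq_zero, sub_eq_zero] at hk0
        apply hne (j - (k + 1))
        have hkj : (k : ℂ) + 1 + ((j - (k+1) : ℕ) : ℂ) = j := by
          rw [Nat.cast_sub (Finset.mem_range.mp hk)]
          push_cast; ring
        rw [hk0, ← hkj]; ring
      · field_simp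
    rw [heq]
    have hMb : (‖Complex.Gamma α‖)⁻¹ ≤ max M 1 := by
      have hball : α ∈ Metric.closedBall (0 : ℂ) K₀ := by
        rw [Metric.mem_closedBall, dist_zero_right]
        exact hα
      have h1 := hM α hball
      rw [norm_inv, norm_norm] at h1
      exact h1.trans (le_max_left _ _)
    have hprod1 : (∏ k ∈ Finset.range j, ‖α - ((k : ℂ) + 1)‖) ≤
        ∏ k ∈ Finset.range N, (K₀ + ((k : ℝ) + 1)) := by
      calc (∏ k ∈ Finset.range j, ‖α - ((k : ℂ) + 1)‖)
          ≤ ∏ k ∈ Finset.range j, (K₀ + ((k : ℝ) + 1)) := by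
            apply Finset.prod_le_prod (fun i _ => by positivity)
            intro i _
            calc ‖α - ((i : ℂ) + 1)‖
                ≤ ‖α‖ + ‖(i : ℂ) + 1‖ := by
                  exact norm_sub_le α ((i : ℂ) + 1)
              _ ≤ K₀ + ((i : ℝ) + 1) := by
                  apply add_le_add hα
                  rw [show ((i : ℂ) + 1) = ((i + 1 : ℕ) : ℂ) by push_cast; ring,
                    Complex.norm_natCast]
                  push_cast
                  exact le_rfl
        _ ≤ ∏ k ∈ Finset.range N, (K₀ + ((k : ℝ) + 1)) := by
            rw [← Finset.prod_range_mul_prod_Ico (fun k : ℕ => K₀ + ((k : ℝ) + 1)) hjN]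
            have h1 : (1 : ℝ) ≤ ∏ k ∈ Finset.Ico j N, (K₀ + ((k : ℝ) + 1)) := by
              have h2 := Finset.prod_le_prod (s := Finset.Ico j N)
                (f := fun _ : ℕ => (1 : ℝ)) (g := fun k : ℕ => K₀ + ((k : ℝ) + 1))
                (fun i _ => zero_le_one)
                (fun i _ => by
                  show (1 : ℝ) ≤ K₀ + ((i : ℝ) + 1)
                  have : (0 : ℝ) ≤ i := Nat.cast_nonneg i
                  linarith)
              simpa using h2
            exact le_mul_of_one_le_right
              (Finset.prod_nonneg fun i _ => by positivity) h1
    have hprod2 := prod_boundX K₀ hK₀ N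
    have hP : (0 : ℝ) ≤ ∏ k ∈ Finset.range j, ‖α - ((k : ℂ) + 1)‖ :=
      Finset.prod_nonneg (fun i _ => by positivity)
    calc (∏ k ∈ Finset.range j, ‖α - ((k : ℂ) + 1)‖) *
          (‖Complex.Gamma α‖)⁻¹
        ≤ ((N.factorial : ℝ) * Real.exp K₀ * ((N : ℝ) + 1) ^ K₀) * (max M 1) := by
          apply mul_le_mul (hprod1.trans hprod2) hMb (by positivity)
          positivity
      _ = (max M 1) * Real.exp K₀ * N.factorial * ((N : ℝ) + 1) ^ K₀ := by ring
end

section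
/- Suppose (a_n) are complex numbers, ν > 0, A ≥ 1, κ_A ≥ 2, and for all real x > 1, ∑_{x < n ≤ x + x/(log x)^A} |a_n| ≤ κ_A·x^{1/ν}/(log x)^A. Then for all real x > 1, ∑_{x < n ≤ 2x} |a_n| ≤ κ·x^{1/ν} with κ := κ_A·2^{A + 1/ν}. -/
open Real Finset

private lemma loglem {t : ℝ} (h0 : 0 ≤ t) (h1 : t ≤ 1) :
    Real.log 2 * t ≤ Real.log (1 + t) := by
  have h2 : Real.exp (Real.log 2 * t) ≤ 1 + t := by
    have hc := convexOn_exp.2 (Set.mem_univ (0:ℝ)) (Set.mem_univ (Real.log 2))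
      (by linarith : (0:ℝ) ≤ 1 - t) h0 (by ring)
    have h2' : Real.exp (Real.log 2) = 2 := Real.exp_log (by norm_num)
    simp only [smul_eq_mul, mul_zero, zero_add, Real.exp_zero, h2'] at hc
    calc Real.exp (Real.log 2 * t) = Real.exp (t * Real.log 2) := by ring_nf
      _ ≤ (1-t) * 1 + t * 2 := hc
      _ = 1 + t := by ring
  calc Real.log 2 * t = Real.log (Real.exp (Real.log 2 * t)) := (Real.log_exp _).symm
    _ ≤ Real.log (1+t) := Real.log_le_log (Real.exp_pos _) h2

private lemma aux (a : ℕ → ℂ) (ν A κA : ℝ) (hν : 0 < ν) (hA : 1 ≤ A) (hκA : 2 ≤ κA)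
    (hgrowth : ∀ x : ℝ, 1 < x →
      ∑ n ∈ Finset.Ioc ⌊x⌋₊ ⌊x + x / Real.log x ^ A⌋₊, ‖a n‖ ≤
        κA * x ^ (1 / ν) / Real.log x ^ A)
    (x : ℝ) (hx : Real.exp 1 ≤ x) :
    ∀ n : ℕ, ∀ y : ℝ, x ≤ y → y ≤ 2*x → 2*x - y ≤ n * (x / Real.log (2*x) ^ A) →
      ∑ m ∈ Finset.Ioc ⌊y⌋₊ ⌊2*x⌋₊, ‖a m‖ ≤
        κA * (2*x) ^ (1/ν) * ((Real.log (2*x) - Real.log y)/Real.log 2 + 1) := by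
  have hx1 : (1:ℝ) < x := lt_of_lt_of_le (by nlinarith [Real.exp_one_gt_d9]) hx
  have hx0 : (0:ℝ) < x := by linarith
  have hlogx : 1 ≤ Real.log x := by
    rw [Real.le_log_iff_exp_le hx0]; simpa using hx
  have hlog2x : Real.log x ≤ Real.log (2*x) := Real.log_le_log hx0 (by linarith)
  have hκ0 : (0:ℝ) < κA := by linarith
  intro n
  induction n with
  | zero =>
    intro y h1 h2 h3
    have hy : y = 2*x := by simp at h3; linarith
    subst hy
    simp only [Finset.Ioc_self, Finset.sum_empty]
    have hbr : (Real.log (2*x) - Real.log (2*x))/Real.log 2 + 1 = 1 := by simp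
    rw [hbr, mul_one]
    positivity
  | succ n ih =>
    intro y h1 h2 h3
    have hy0 : (0:ℝ) < y := by linarith
    have hy1 : (1:ℝ) < y := by linarith
    have hlogy : 1 ≤ Real.log y := hlogx.trans (Real.log_le_log hx0 h1)
    have hlogy0 : (0:ℝ) < Real.log y := by linarith
    have hlogyT : Real.log y ≤ Real.log (2*x) := Real.log_le_log hy0 h2
    set L := Real.log y ^ A with hLdef
    have hLpos : 0 < L := Real.rpow_pos_of_pos hlogy0 A
    have hL1 : 1 ≤ L := Real.one_le_rpow hlogy (by linarith)
    have hLT : L ≤ Real.log (2*x) ^ A :=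
      Real.rpow_le_rpow (by linarith) hlogyT (by linarith)
    have hTpow : 0 < Real.log (2*x) ^ A := Real.rpow_pos_of_pos (by linarith) A
    have hstep : x / Real.log (2*x) ^ A ≤ y / L :=
      div_le_div₀ hy0.le h1 hLpos hLT
    have hyy' : y ≤ y + y / L := by
      have : 0 < y / L := by positivity
      linarith
    have hypow : y ^ (1/ν) ≤ (2*x) ^ (1/ν) :=
      Real.rpow_le_rpow hy0.le h2 (by positivity)
    have hbr0 : 0 ≤ (Real.log (2*x) - Real.log y)/Real.log 2 := by
      have : (0:ℝ) < Real.log 2 := Real.log_pos (by norm_num)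
      apply div_nonneg <;> linarith
    rcases le_or_gt (2*x) (y + y / L) with hcov | hcov
    · -- one step covers everything
      have hsub : Finset.Ioc ⌊y⌋₊ ⌊2*x⌋₊ ⊆ Finset.Ioc ⌊y⌋₊ ⌊y + y / L⌋₊ :=
        Finset.Ioc_subset_Ioc le_rfl (Nat.floor_le_floor hcov)
      calc ∑ m ∈ Finset.Ioc ⌊y⌋₊ ⌊2*x⌋₊, ‖a m‖
          ≤ ∑ m ∈ Finset.Ioc ⌊y⌋₊ ⌊y + y / L⌋₊, ‖a m‖ :=
            Finset.sum_le_sum_of_subset_of_nonneg hsub (by intros; positivity)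
        _ ≤ κA * y ^ (1/ν) / L := hgrowth y hy1
        _ ≤ κA * (2*x) ^ (1/ν) := by
            calc κA * y ^ (1/ν) / L ≤ κA * y ^ (1/ν) := by
                  apply div_le_self (by positivity) hL1
              _ ≤ κA * (2*x) ^ (1/ν) := by
                  exact mul_le_mul_of_nonneg_left hypow hκ0.le
        _ ≤ κA * (2*x) ^ (1/ν) * ((Real.log (2*x) - Real.log y)/Real.log 2 + 1) := by
            have hnn : (0:ℝ) ≤ κA * (2*x) ^ (1/ν) := by positivity
            nlinarith [mul_nonneg hnn hbr0]
    · -- split and recurse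
      set y' := y + y / L with hy'def
      have hy'2x : y' ≤ 2*x := hcov.le
      have f1 : ⌊y⌋₊ ≤ ⌊y'⌋₊ := Nat.floor_le_floor hyy'
      have f2 : ⌊y'⌋₊ ≤ ⌊2*x⌋₊ := Nat.floor_le_floor hy'2x
      have hsplit : ∑ m ∈ Finset.Ioc ⌊y⌋₊ ⌊2*x⌋₊, ‖a m‖ =
          (∑ m ∈ Finset.Ioc ⌊y⌋₊ ⌊y'⌋₊, ‖a m‖) +
          ∑ m ∈ Finset.Ioc ⌊y'⌋₊ ⌊2*x⌋₊, ‖a m‖ := by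
        rw [← Finset.sum_union]
        · rw [Finset.Ioc_union_Ioc_eq_Ioc f1 f2]
        · rw [Finset.disjoint_left]
          intro m hm hm'
          simp only [Finset.mem_Ioc] at hm hm'
          omega
      have ht1 : 1 / L ≤ 1 := by
        rw [div_le_one hLpos]; exact hL1
      have ht0 : 0 ≤ 1 / L := by positivity
      have hkey : Real.log 2 * (1 / L) ≤ Real.log (1 + 1 / L) := loglem ht0 ht1
      have hlogy' : Real.log y' = Real.log y + Real.log (1 + 1 / L) := by
        have hyeq : y' = y * (1 + 1 / L) := by
          rw [hy'def]
          field_simp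
        rw [hyeq, Real.log_mul (ne_of_gt hy0) (by positivity)]
      have hlog2pos : (0:ℝ) < Real.log 2 := Real.log_pos (by norm_num)
      have hb1 : ∑ m ∈ Finset.Ioc ⌊y⌋₊ ⌊y'⌋₊, ‖a m‖ ≤
          κA * (2*x) ^ (1/ν) * ((Real.log y' - Real.log y)/Real.log 2) := by
        calc ∑ m ∈ Finset.Ioc ⌊y⌋₊ ⌊y'⌋₊, ‖a m‖
            ≤ κA * y ^ (1/ν) / L := hgrowth y hy1
          _ = κA * y ^ (1/ν) * (1 / L) := by ring
          _ ≤ κA * (2*x) ^ (1/ν) * ((Real.log y' - Real.log y)/Real.log 2) := by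
              apply mul_le_mul
              · exact mul_le_mul_of_nonneg_left hypow hκ0.le
              · rw [hlogy']
                rw [le_div_iff₀ hlog2pos]
                calc (1/L) * Real.log 2 = Real.log 2 * (1/L) := by ring
                  _ ≤ Real.log (1 + 1/L) := hkey
                  _ = Real.log y + Real.log (1 + 1/L) - Real.log y := by ring
              · exact ht0
              · positivity
      have hb2 : ∑ m ∈ Finset.Ioc ⌊y'⌋₊ ⌊2*x⌋₊, ‖a m‖ ≤
          κA * (2*x) ^ (1/ν) * ((Real.log (2*x) - Real.log y')/Real.log 2 + 1) := by
        apply ih y' (h1.trans hyy') hy'2x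
        push_cast at h3 ⊢
        have hy'eq : y' = y + y / L := hy'def
        linarith
      rw [hsplit]
      have hcomb : κA * (2*x) ^ (1/ν) * ((Real.log y' - Real.log y)/Real.log 2) +
          κA * (2*x) ^ (1/ν) * ((Real.log (2*x) - Real.log y')/Real.log 2 + 1) =
          κA * (2*x) ^ (1/ν) * ((Real.log (2*x) - Real.log y)/Real.log 2 + 1) := by
        field_simp
        ring
      linarith

theorem stmt_14 (a : ℕ → ℂ) (ν A κA : ℝ) (hν : 0 < ν) (hA : 1 ≤ A) (hκA : 2 ≤ κA)
    (hgrowth : ∀ x : ℝ, 1 < x →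
      ∑ n ∈ Finset.Ioc ⌊x⌋₊ ⌊x + x / Real.log x ^ A⌋₊, ‖a n‖ ≤
        κA * x ^ (1 / ν) / Real.log x ^ A) :
    ∀ x : ℝ, 1 < x →
      ∑ n ∈ Finset.Ioc ⌊x⌋₊ ⌊2 * x⌋₊, ‖a n‖ ≤
        (κA * 2 ^ (A + 1 / ν)) * x ^ (1 / ν) := by
  intro x hx
  have hx0 : (0:ℝ) < x := by linarith
  have hκ0 : (0:ℝ) < κA := by linarith
  have h2A : (2:ℝ) ≤ 2 ^ A := by
    calc (2:ℝ) = 2 ^ (1:ℝ) := (Real.rpow_one 2).symm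
      _ ≤ 2 ^ A := Real.rpow_le_rpow_of_exponent_le one_le_two hA
  have hsplitpow : (2:ℝ) ^ (A + 1/ν) = 2 ^ A * 2 ^ (1/ν) := Real.rpow_add (by norm_num) A (1/ν)
  have hmulpow : (2*x) ^ (1/ν) = 2 ^ (1/ν) * x ^ (1/ν) :=
    Real.mul_rpow (by norm_num) hx0.le
  rcases le_or_gt (Real.exp 1) x with hcase | hcase
  · -- large x : iterate
    have hT1 : (1:ℝ) < 2*x := by linarith
    have hTpow : 0 < Real.log (2*x) ^ A :=
      Real.rpow_pos_of_pos (Real.log_pos hT1) A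
    set δ := x / Real.log (2*x) ^ A with hδdef
    have hδpos : 0 < δ := by positivity
    have hn : x ≤ (⌈x / δ⌉₊ : ℝ) * δ := by
      have := Nat.le_ceil (x / δ)
      rw [div_le_iff₀ hδpos] at this
      exact this
    have := aux a ν A κA hν hA hκA hgrowth x hcase ⌈x / δ⌉₊ x le_rfl (by linarith)
      (by push_cast; linarith)
    have hlog2x : Real.log (2*x) = Real.log 2 + Real.log x :=
      Real.log_mul (by norm_num) (ne_of_gt hx0)
    have hlog2pos : (0:ℝ) < Real.log 2 := Real.log_pos (by norm_num)
    have hbr : (Real.log (2*x) - Real.log x)/Real.log 2 + 1 = 2 := by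
      rw [hlog2x]
      field_simp
      ring
    rw [hbr] at this
    calc ∑ n ∈ Finset.Ioc ⌊x⌋₊ ⌊2 * x⌋₊, ‖a n‖
        ≤ κA * (2*x) ^ (1/ν) * 2 := this
      _ ≤ (κA * 2 ^ (A + 1 / ν)) * x ^ (1 / ν) := by
          rw [hsplitpow, hmulpow]
          have hxp : (0:ℝ) ≤ x ^ (1/ν) := Real.rpow_nonneg hx0.le _
          have h2p : (0:ℝ) ≤ (2:ℝ) ^ (1/ν) := Real.rpow_nonneg (by norm_num) _
          nlinarith [mul_nonneg (mul_nonneg (mul_nonneg hκ0.le h2p) hxp)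
            (by linarith : (0:ℝ) ≤ 2 ^ A - 2)]
  · -- small x : single application at max x 1.7
    set y := max x 1.7 with hydef
    have hy17 : (1.7:ℝ) ≤ y := le_max_right _ _
    have hyx : x ≤ y := le_max_left _ _
    have hy1 : (1:ℝ) < y := by linarith
    have hy0 : (0:ℝ) < y := by linarith
    have h17e : (1.7:ℝ) < Real.exp 1 := by nlinarith [Real.exp_one_gt_d9]
    have hye : y < Real.exp 1 := max_lt hcase h17e
    have hy2x : y ≤ 2*x := by
      apply max_le (by linarith)
      linarith
    have hloghalf : (1/2:ℝ) ≤ Real.log y := by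
      rw [Real.le_log_iff_exp_le hy0]
      have hsq : Real.exp (1/2) * Real.exp (1/2) = Real.exp 1 := by
        rw [← Real.exp_add]; norm_num
      have : Real.exp (1/2) < 1.7 := by
        nlinarith [Real.exp_one_lt_d9, Real.exp_pos (1/2:ℝ)]
      linarith
    have hlogy1 : Real.log y < 1 := by
      have := Real.log_le_log hy0 hye.le
      rw [Real.log_exp] at this
      rcases lt_or_eq_of_le this with h | h
      · exact h
      · exact absurd (h ▸ (Real.log_lt_log hy0 hye)) (by rw [Real.log_exp]; exact lt_irrefl 1)
    have hlogy0 : (0:ℝ) < Real.log y := by linarith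
    set L := Real.log y ^ A with hLdef
    have hLpos : 0 < L := Real.rpow_pos_of_pos hlogy0 A
    have hL1 : L ≤ 1 := Real.rpow_le_one hlogy0.le hlogy1.le (by linarith)
    have hLlow : (2:ℝ) ^ (-A) ≤ L := by
      have h1 : ((1:ℝ)/2) ^ A ≤ Real.log y ^ A :=
        Real.rpow_le_rpow (by norm_num) hloghalf (by linarith)
      have h2 : ((1:ℝ)/2) ^ A = (2:ℝ) ^ (-A) := by
        rw [Real.rpow_neg (by norm_num : (0:ℝ) ≤ 2), ← Real.inv_rpow (by norm_num : (0:ℝ) ≤ 2)]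
        norm_num
      rw [← h2]; exact h1
    have hcov : 2*x ≤ y + y / L := by
      have hyL : y ≤ y / L := by
        rw [le_div_iff₀ hLpos]
        nlinarith
      linarith
    have hsubL : ⌊y⌋₊ ≤ ⌊x⌋₊ := by
      rcases le_total (1.7:ℝ) x with h | h
      · have : y = x := max_eq_left h
        rw [this]
      · have hyeq : y = (1.7:ℝ) := max_eq_right h
        rw [hyeq]
        have h17 : ⌊(1.7:ℝ)⌋₊ = 1 := by
          rw [Nat.floor_eq_iff (by norm_num)]
          norm_num
        rw [h17]
        exact Nat.le_floor (by push_cast; linarith)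
    have hsub : Finset.Ioc ⌊x⌋₊ ⌊2*x⌋₊ ⊆ Finset.Ioc ⌊y⌋₊ ⌊y + y / L⌋₊ :=
      Finset.Ioc_subset_Ioc hsubL (Nat.floor_le_floor hcov)
    have hinv : 1 / L ≤ (2:ℝ) ^ A := by
      rw [div_le_iff₀ hLpos]
      have h2Apos : (0:ℝ) < (2:ℝ) ^ A := Real.rpow_pos_of_pos (by norm_num) A
      have := mul_le_mul_of_nonneg_left hLlow h2Apos.le
      calc (1:ℝ) = 2 ^ A * 2 ^ (-A) := by
            rw [← Real.rpow_add (by norm_num : (0:ℝ) < 2)]; norm_num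
        _ ≤ 2 ^ A * L := this
    have hypow : y ^ (1/ν) ≤ 2 ^ (1/ν) * x ^ (1/ν) := by
      rw [← hmulpow]
      exact Real.rpow_le_rpow hy0.le hy2x (by positivity)
    calc ∑ n ∈ Finset.Ioc ⌊x⌋₊ ⌊2 * x⌋₊, ‖a n‖
        ≤ ∑ n ∈ Finset.Ioc ⌊y⌋₊ ⌊y + y / L⌋₊, ‖a n‖ :=
          Finset.sum_le_sum_of_subset_of_nonneg hsub (by intros; positivity)
      _ ≤ κA * y ^ (1/ν) / L := hgrowth y hy1
      _ = κA * y ^ (1/ν) * (1/L) := by ring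
      _ ≤ κA * (2 ^ (1/ν) * x ^ (1/ν)) * (2 ^ A) := by
          apply mul_le_mul
          · exact mul_le_mul_of_nonneg_left hypow hκ0.le
          · exact hinv
          · positivity
          · positivity
      _ = (κA * 2 ^ (A + 1 / ν)) * x ^ (1 / ν) := by
          rw [hsplitpow]; ring
end

section
/- Let q ≥ 2 and let a be coprime to q, and for complex z define the arithmetic function n ↦ z^{Ω_a(n)}, where Ω_a(n) := ∑_{p ≡ a (mod q)} v_p(n). Then for Re(s) > 1 and |z| < p(q,a) (the least prime ≡ a mod q), ∑_{n ≥ 1} z^{Ω_a(n)}/n^s = ζ(s)·∏_{p ≡ a (mod q)} (1 − z/p^s)^{−1}(1 − 1/p^s), and the product converges absolutely. -/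
open Complex EulerProduct Nat

section OmegaAux
variable (P : ℕ → Prop) [DecidablePred P]
private def Om (n : ℕ) : ℕ := ∑ p ∈ n.primeFactors.filter P, n.factorization p
variable {P}
private lemma Om_eq (n : ℕ) :
    Om P n = (n.factorization).sum fun p k => if P p then k else 0 := by
  rw [Om, Finset.sum_filter, Finsupp.sum, Nat.support_factorization]
private lemma Om_mul {m n : ℕ} (hm : m ≠ 0) (hn : n ≠ 0) :
    Om P (m * n) = Om P m + Om P n := by
  simp only [Om_eq, Nat.factorization_mul hm hn]
  exact Finsupp.sum_add_index' (fun p => by simp) (fun p k1 k2 => by split <;> simp)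
private lemma Om_one : Om P 1 = 0 := by simp [Om]
private lemma Om_prime {p : ℕ} (hp : p.Prime) : Om P p = if P p then 1 else 0 := by
  rw [Om, Nat.Prime.primeFactors hp, Finset.filter_singleton]
  split <;> simp [hp.factorization]
end OmegaAux

section Homs

variable (P : ℕ → Prop) [DecidablePred P]

private noncomputable def fHom (z : ℂ) {s : ℂ} (hs : s ≠ 0) : ℕ →*₀ ℂ where
  toFun n := (if n = 0 then 0 else z ^ Om P n) * (n : ℂ) ^ (-s)
  map_zero' := by simp
  map_one' := by simp [Om_one]
  map_mul' m n := by
    rcases eq_or_ne m 0 with rfl | hm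
    · simp
    rcases eq_or_ne n 0 with rfl | hn
    · simp
    have hcast : (((m * n : ℕ)) : ℂ) ^ (-s) = (m : ℂ) ^ (-s) * (n : ℂ) ^ (-s) := by
      simpa only [Nat.cast_mul, ofReal_natCast]
        using mul_cpow_ofReal_nonneg m.cast_nonneg n.cast_nonneg (-s)
    simp only [if_neg hm, if_neg hn, if_neg (Nat.mul_ne_zero hm hn), Om_mul hm hn, pow_add, hcast]
    ring

private noncomputable def FHom (t : ℝ) (σ : ℝ) : ℕ →* ℝ where
  toFun n := (if n = 0 then 0 else t ^ Om P n) * (n : ℝ) ^ (-σ)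
  map_one' := by simp [Om_one]
  map_mul' m n := by
    rcases eq_or_ne m 0 with rfl | hm
    · simp
    rcases eq_or_ne n 0 with rfl | hn
    · simp
    have hcast : (((m * n : ℕ)) : ℝ) ^ (-σ) = (m : ℝ) ^ (-σ) * (n : ℝ) ^ (-σ) := by
      rw [Nat.cast_mul, Real.mul_rpow m.cast_nonneg n.cast_nonneg]
    simp only [if_neg hm, if_neg hn, if_neg (Nat.mul_ne_zero hm hn), Om_mul hm hn, pow_add, hcast]
    ring

variable {P}

private lemma norm_fHom (z : ℂ) {s : ℂ} (hs : s ≠ 0) (n : ℕ) :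
    ‖fHom P z hs n‖ = FHom P ‖z‖ s.re n := by
  rcases eq_or_ne n 0 with rfl | hn
  · simp [fHom, FHom]
  · simp only [fHom, FHom, MonoidWithZeroHom.coe_mk, ZeroHom.coe_mk, MonoidHom.coe_mk,
      OneHom.coe_mk, if_neg hn]
    rw [norm_mul, norm_pow, norm_natCast_cpow_of_pos (Nat.pos_of_ne_zero hn), neg_re]

end Homs

section Summability

variable {P : ℕ → Prop} [DecidablePred P]

private lemma FHom_nonneg {t σ : ℝ} (ht0 : 0 ≤ t) (n : ℕ) : 0 ≤ FHom P t σ n := by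
  refine mul_nonneg ?_ (Real.rpow_nonneg n.cast_nonneg _)
  split
  · exact le_rfl
  · exact pow_nonneg ht0 _

private lemma summable_FHom {t σ : ℝ} (ht0 : 0 ≤ t) (hσ : 1 < σ) {p₀ : ℕ}
    (ht : t < (p₀ : ℝ)) (hP : ∀ p : ℕ, p.Prime → P p → p₀ ≤ p) :
    Summable (FHom P t σ) := by
  set F := FHom P t σ with hF
  have hp₀ : (0:ℝ) < (p₀ : ℝ) := lt_of_le_of_lt ht0 ht
  set xb : ℝ := max 2⁻¹ (t / p₀) with hxb
  have hxb1 : xb < 1 := max_lt (by norm_num) ((div_lt_one hp₀).mpr ht)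
  have hxb0 : (0:ℝ) ≤ xb := le_trans (by norm_num) (le_max_left _ _)
  set K : ℝ := (1 - xb)⁻¹ with hK
  have hK0 : 0 < K := inv_pos.mpr (by linarith)
  -- each prime value is at most xb
  have hFp_eq : ∀ p : ℕ, p.Prime → F p = (if P p then t else 1) * (p:ℝ) ^ (-σ) := by
    intro p hp
    simp only [hF, FHom, MonoidHom.coe_mk, OneHom.coe_mk, if_neg hp.ne_zero, Om_prime hp]
    split <;> simp
  have hFp_le : ∀ p : ℕ, p.Prime → F p ≤ xb := by
    intro p hp
    have hp1 : (1:ℝ) ≤ (p:ℝ) := by exact_mod_cast hp.one_lt.le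
    have hrp : (p:ℝ) ^ (-σ) ≤ (p:ℝ)⁻¹ := by
      have h := Real.rpow_le_rpow_of_exponent_le hp1 (neg_le_neg hσ.le)
      rwa [Real.rpow_neg_one] at h
    have hrp0 : (0:ℝ) ≤ (p:ℝ) ^ (-σ) := Real.rpow_nonneg p.cast_nonneg _
    rw [hFp_eq p hp]
    by_cases hPp : P p
    · rw [if_pos hPp]
      have hpp₀ : (p₀:ℝ) ≤ (p:ℝ) := by exact_mod_cast hP p hp hPp
      have h1 : t * (p:ℝ) ^ (-σ) ≤ t * (p:ℝ)⁻¹ := mul_le_mul_of_nonneg_left hrp ht0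
      have h2 : (p:ℝ)⁻¹ ≤ (p₀:ℝ)⁻¹ := inv_anti₀ hp₀ hpp₀
      have h3 : t * (p:ℝ)⁻¹ ≤ t / p₀ := by
        rw [div_eq_mul_inv]
        exact mul_le_mul_of_nonneg_left h2 ht0
      exact le_trans (le_trans h1 h3) (le_max_right _ _)
    · rw [if_neg hPp, one_mul]
      have hp2 : (2:ℝ) ≤ (p:ℝ) := by exact_mod_cast hp.two_le
      have h2 : (p:ℝ)⁻¹ ≤ 2⁻¹ := inv_anti₀ (by norm_num) hp2
      exact le_trans (le_trans hrp h2) (le_max_left _ _)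
  have hnorm1 : ∀ {p : ℕ}, p.Prime → ‖F p‖ < 1 := by
    intro p hp
    rw [Real.norm_of_nonneg (FHom_nonneg ht0 p)]
    exact lt_of_le_of_lt (hFp_le p hp) hxb1
  -- bound on sums of F over primes
  have hgsum : Summable (fun n : ℕ => (n:ℝ) ^ (-σ)) :=
    Real.summable_nat_rpow.mpr (by linarith)
  set M : ℝ := max t 1 with hM
  have hM0 : 0 ≤ M := le_trans zero_le_one (le_max_right _ _)
  set B : ℝ := ∑' n : ℕ, (n:ℝ) ^ (-σ) with hB
  have hsum_le : ∀ N : ℕ, ∑ p ∈ N.primesBelow, F p ≤ M * B := by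
    intro N
    have h1 : ∑ p ∈ N.primesBelow, F p ≤ ∑ p ∈ N.primesBelow, M * (p:ℝ) ^ (-σ) := by
      refine Finset.sum_le_sum fun p hp => ?_
      have hp' := Nat.prime_of_mem_primesBelow hp
      rw [hFp_eq p hp']
      refine mul_le_mul_of_nonneg_right ?_ (Real.rpow_nonneg p.cast_nonneg _)
      split
      · exact le_max_left _ _
      · exact le_max_right _ _
    rw [← Finset.mul_sum] at h1
    refine h1.trans (mul_le_mul_of_nonneg_left ?_ hM0)
    exact Summable.sum_le_tsum _ (fun n _ => Real.rpow_nonneg n.cast_nonneg _) hgsum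
  -- pointwise bound (1-x)⁻¹ ≤ exp (K x)
  have hexp_bound : ∀ x : ℝ, 0 ≤ x → x ≤ xb → (1 - x)⁻¹ ≤ Real.exp (K * x) := by
    intro x hx0 hxxb
    have h1x : (0:ℝ) < 1 - x := by linarith [lt_of_le_of_lt hxxb hxb1]
    have hid : (1 - x)⁻¹ = 1 + x * (1 - x)⁻¹ := by field_simp; ring
    have h2 : (1 - x)⁻¹ ≤ K := inv_anti₀ (by linarith) (by linarith)
    have h3 : x * (1 - x)⁻¹ ≤ x * K := mul_le_mul_of_nonneg_left h2 hx0
    have h4 := Real.add_one_le_exp (K * x)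
    rw [hid]
    nlinarith
  -- uniform bound on the partial Euler products
  set C : ℝ := Real.exp (K * (M * B)) with hC
  have hQ_le : ∀ N : ℕ, ∏ p ∈ N.primesBelow, (1 - F p)⁻¹ ≤ C := by
    intro N
    have h1 : ∏ p ∈ N.primesBelow, (1 - F p)⁻¹ ≤ ∏ p ∈ N.primesBelow, Real.exp (K * F p) := by
      refine Finset.prod_le_prod (fun p hp => ?_) (fun p hp => ?_)
      · have := lt_of_le_of_lt (hFp_le p (Nat.prime_of_mem_primesBelow hp)) hxb1
        exact inv_nonneg.mpr (by linarith)
      · exact hexp_bound _ (FHom_nonneg ht0 p) (hFp_le p (Nat.prime_of_mem_primesBelow hp))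
    rw [← Real.exp_sum, ← Finset.mul_sum] at h1
    refine h1.trans (Real.exp_le_exp.mpr ?_)
    exact mul_le_mul_of_nonneg_left (hsum_le N) hK0.le
  -- partial sums of F over range N are bounded by C
  refine summable_of_sum_range_le (c := C) (FHom_nonneg ht0) fun N => ?_
  obtain ⟨hsummN, hhsN⟩ :=
    EulerProduct.summable_and_hasSum_smoothNumbers_prod_primesBelow_geometric
      (f := FHom P t σ) hnorm1 N
  have hsummN' : Summable (fun m : N.smoothNumbers => F m) := by
    refine hsummN.congr fun m => ?_
    exact Real.norm_of_nonneg (FHom_nonneg ht0 m)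
  have hind : Summable ((N.smoothNumbers : Set ℕ).indicator F) := by
    rwa [← summable_subtype_iff_indicator]
  have heq : ∀ n ∈ Finset.range N, F n = (N.smoothNumbers : Set ℕ).indicator F n := by
    intro n hn
    rcases eq_or_ne n 0 with rfl | hn0
    · have : (0:ℕ) ∉ (N.smoothNumbers : Set ℕ) := fun h => (Nat.ne_zero_of_mem_smoothNumbers h) rfl
      rw [Set.indicator_of_notMem this]
      simp [hF, FHom]
    · have hmem : n ∈ N.smoothNumbers := by
        rw [Nat.mem_smoothNumbers']
        intro p hp hpn
        exact lt_of_le_of_lt (Nat.le_of_dvd (Nat.pos_of_ne_zero hn0) hpn) (Finset.mem_range.mp hn)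
      rw [Set.indicator_of_mem hmem]
  rw [Finset.sum_congr rfl heq]
  have h5 : ∑ n ∈ Finset.range N, (N.smoothNumbers : Set ℕ).indicator F n ≤
      ∑' n : ℕ, (N.smoothNumbers : Set ℕ).indicator F n :=
    Summable.sum_le_tsum _ (fun n _ => Set.indicator_apply_nonneg fun _ => FHom_nonneg ht0 n) hind
  refine h5.trans ?_
  rw [← tsum_subtype]
  rw [hhsN.tsum_eq]
  exact hQ_le N

end Summability

section MultAux

private lemma one_sub_ne_zero_of_norm_lt_one {x : ℂ} (h : ‖x‖ < 1) : 1 - x ≠ 0 := by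
  intro hx
  rw [sub_eq_zero] at hx
  rw [← hx] at h
  simp at h

private lemma mult_one_sub {α : Type*} {g : α → ℂ} (hsum : Summable g)
    (h1 : ∀ i, 1 - g i ≠ 0) : Multipliable fun i => 1 - g i := by
  have H := hsum.clog_one_sub.hasSum.cexp
  have heq : (Complex.exp ∘ fun i => Complex.log (1 - g i)) = fun i => 1 - g i :=
    funext fun i => Complex.exp_log (h1 i)
  exact ⟨_, heq ▸ H⟩

private lemma mult_one_sub_inv {α : Type*} {g : α → ℂ} (hsum : Summable g)
    (h1 : ∀ i, 1 - g i ≠ 0) : Multipliable fun i => (1 - g i)⁻¹ := by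
  have H := hsum.clog_one_sub.neg.hasSum.cexp
  have heq : (Complex.exp ∘ fun i => -Complex.log (1 - g i)) = fun i => (1 - g i)⁻¹ :=
    funext fun i => by rw [Function.comp_apply, Complex.exp_neg, Complex.exp_log (h1 i)]
  exact ⟨_, heq ▸ H⟩

end MultAux

theorem stmt_18 (q : ℕ) (hq : 2 ≤ q) [NeZero q] (a : (ZMod q)ˣ) (z : ℂ)
    (hz : ‖z‖ <
      ((sInf {p : ℕ | p.Prime ∧ ((p : ZMod q) = (a : ZMod q))} : ℕ) : ℝ))
    (s : ℂ) (hs : 1 < s.re) :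
    Multipliable (fun p : {p : Nat.Primes // (((p : Nat.Primes) : ℕ) : ZMod q) = (a : ZMod q)} =>
        (1 - z / ((((p : Nat.Primes) : ℕ)) : ℂ) ^ s)⁻¹ *
          (1 - 1 / ((((p : Nat.Primes) : ℕ)) : ℂ) ^ s)) ∧
    ∑' n : ℕ,
        (if n = 0 then 0 else
          z ^ (∑ p ∈ n.primeFactors.filter (fun p : ℕ => ((p : ZMod q) = (a : ZMod q))),
                n.factorization p) /
            (n : ℂ) ^ s) =
      riemannZeta s *
        ∏' p : {p : Nat.Primes // (((p : Nat.Primes) : ℕ) : ZMod q) = (a : ZMod q)},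
          ((1 - z / ((((p : Nat.Primes) : ℕ)) : ℂ) ^ s)⁻¹ *
            (1 - 1 / ((((p : Nat.Primes) : ℕ)) : ℂ) ^ s)) := by
  have hs0 : s ≠ 0 := Complex.ne_zero_of_one_lt_re hs
  have hkey : ∀ p : ℕ, p.Prime → ((p : ZMod q) = (a : ZMod q)) →
      sInf {p : ℕ | p.Prime ∧ ((p : ZMod q) = (a : ZMod q))} ≤ p :=
    fun p pp hp => Nat.sInf_le ⟨pp, hp⟩
  set f := fHom (fun p : ℕ => ((p : ZMod q) = (a : ZMod q))) z hs0 with hfdef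
  have hsumnorm : Summable (fun n => ‖f n‖) :=
    (summable_FHom (norm_nonneg z) hs hz hkey).congr
      (fun n => (norm_fHom z hs0 n).symm)
  have Hg := EulerProduct.eulerProduct_completely_multiplicative_hasProd hsumnorm
  -- norm bounds at primes
  have honelt : ∀ p : Nat.Primes, (1:ℝ) < ((p:ℕ):ℝ) := fun p => by exact_mod_cast p.prop.one_lt
  have hplt : ∀ p : Nat.Primes, ‖(((p:ℕ)):ℂ) ^ (-s)‖ < 1 := by
    intro p
    rw [norm_natCast_cpow_of_pos p.prop.pos]
    exact Real.rpow_lt_one_of_one_lt_of_neg (honelt p) (by rw [neg_re]; linarith)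
  have hzplt : ∀ p : Nat.Primes, (((p:ℕ)) : ZMod q) = (a : ZMod q) →
      ‖z * (((p:ℕ)):ℂ) ^ (-s)‖ < 1 := by
    intro p hp
    rw [norm_mul, norm_natCast_cpow_of_pos p.prop.pos, neg_re,
      Real.rpow_neg (Nat.cast_nonneg _), ← div_eq_mul_inv,
      div_lt_one (Real.rpow_pos_of_pos (by exact_mod_cast p.prop.pos) _)]
    have h1 : ((sInf {p : ℕ | p.Prime ∧ ((p : ZMod q) = (a : ZMod q))} : ℕ) : ℝ) ≤ ((p:ℕ):ℝ) := by
      exact_mod_cast hkey _ p.prop hp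
    have h2 : ((p:ℕ):ℝ) ≤ ((p:ℕ):ℝ) ^ s.re := by
      have := Real.rpow_le_rpow_of_exponent_le (honelt p).le (le_of_lt hs)
      rwa [Real.rpow_one] at this
    calc ‖z‖ < _ := hz
    _ ≤ ((p:ℕ):ℝ) := h1
    _ ≤ _ := h2
  -- summability over the subtype
  have hζsummand : Summable (fun n : ℕ => ((n:ℂ)) ^ (-s)) :=
    (summable_riemannZetaSummand hs).of_norm
  have hj : Function.Injective
      (fun p : {p : Nat.Primes // (((p : Nat.Primes) : ℕ) : ZMod q) = (a : ZMod q)} =>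
        (((p : Nat.Primes)) : ℕ)) :=
    fun p1 p2 hh => Subtype.ext (Nat.Primes.coe_nat_injective hh)
  have hsum1 : Summable
      (fun p : {p : Nat.Primes // (((p : Nat.Primes) : ℕ) : ZMod q) = (a : ZMod q)} =>
        z * ((((p : Nat.Primes)) : ℕ) : ℂ) ^ (-s)) :=
    (hζsummand.mul_left z).comp_injective hj
  have hsum2 : Summable
      (fun p : {p : Nat.Primes // (((p : Nat.Primes) : ℕ) : ZMod q) = (a : ZMod q)} =>
        ((((p : Nat.Primes)) : ℕ) : ℂ) ^ (-s)) :=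
    hζsummand.comp_injective hj
  have M1 := mult_one_sub_inv hsum1
    (fun p => one_sub_ne_zero_of_norm_lt_one (hzplt p p.2))
  have M2 := mult_one_sub hsum2
    (fun p => one_sub_ne_zero_of_norm_lt_one (hplt p))
  have Mult0 := M1.mul M2
  have hfneq : (fun p : {p : Nat.Primes // (((p : Nat.Primes) : ℕ) : ZMod q) = (a : ZMod q)} =>
        (1 - z / ((((p : Nat.Primes) : ℕ)) : ℂ) ^ s)⁻¹ *
          (1 - 1 / ((((p : Nat.Primes) : ℕ)) : ℂ) ^ s)) =
      (fun p : {p : Nat.Primes // (((p : Nat.Primes) : ℕ) : ZMod q) = (a : ZMod q)} =>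
        (1 - z * ((((p : Nat.Primes)) : ℕ) : ℂ) ^ (-s))⁻¹ *
          (1 - ((((p : Nat.Primes)) : ℕ) : ℂ) ^ (-s))) := by
    funext p
    rw [cpow_neg, div_eq_mul_inv, one_div]
  have Mult' : Multipliable
      (fun p : {p : Nat.Primes // (((p : Nat.Primes) : ℕ) : ZMod q) = (a : ZMod q)} =>
        (1 - z / ((((p : Nat.Primes) : ℕ)) : ℂ) ^ s)⁻¹ *
          (1 - 1 / ((((p : Nat.Primes) : ℕ)) : ℂ) ^ s)) := by
    rw [hfneq]; exact Mult0
  refine ⟨Mult', ?_⟩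
  set T := ∏' p : {p : Nat.Primes // (((p : Nat.Primes) : ℕ) : ZMod q) = (a : ZMod q)},
      ((1 - z / ((((p : Nat.Primes) : ℕ)) : ℂ) ^ s)⁻¹ *
        (1 - 1 / ((((p : Nat.Primes) : ℕ)) : ℂ) ^ s)) with hT
  set h : Nat.Primes → ℂ := fun p => if (((p:ℕ)) : ZMod q) = (a : ZMod q) then
      (1 - z * (((p:ℕ)):ℂ) ^ (-s))⁻¹ * (1 - (((p:ℕ)):ℂ) ^ (-s)) else 1 with hhdef
  have hsupp : Function.mulSupport h ⊆
      {p : Nat.Primes | (((p:ℕ)) : ZMod q) = (a : ZMod q)} := by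
    intro p hp
    by_contra hc
    exact hp (if_neg hc)
  have hcomp : (fun p : {p : Nat.Primes // (((p : Nat.Primes) : ℕ) : ZMod q) = (a : ZMod q)} =>
      h ↑p) =
      (fun p : {p : Nat.Primes // (((p : Nat.Primes) : ℕ) : ZMod q) = (a : ZMod q)} =>
        (1 - z * ((((p : Nat.Primes)) : ℕ) : ℂ) ^ (-s))⁻¹ *
          (1 - ((((p : Nat.Primes)) : ℕ) : ℂ) ^ (-s))) :=
    funext fun p => if_pos p.2
  have Hsub : HasProd (fun p : {p : Nat.Primes // (((p : Nat.Primes) : ℕ) : ZMod q) = (a : ZMod q)} =>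
      h ↑p) T := by
    have H1 := Mult'.hasProd
    rw [← hT] at H1
    rw [hfneq] at H1
    exact hcomp.symm ▸ H1
  have Hh : HasProd h T := (hasProd_subtype_iff_of_mulSupport_subset hsupp).mp Hsub
  have Hζ := riemannZeta_eulerProduct_hasProd hs
  have Hmul := Hζ.mul Hh
  have hgfun : (fun p : Nat.Primes => (1 - f ↑p)⁻¹) =
      fun p : Nat.Primes => (1 - (p : ℂ) ^ (-s))⁻¹ * h p := by
    funext p
    have hp0 : ((p:ℕ)) ≠ 0 := p.prop.ne_zero
    have hw : (1 : ℂ) - (((p:ℕ)):ℂ) ^ (-s) ≠ 0 := one_sub_ne_zero_of_norm_lt_one (hplt p)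
    simp only [hfdef, fHom, MonoidWithZeroHom.coe_mk, ZeroHom.coe_mk, if_neg hp0,
      Om_prime p.prop, hhdef]
    by_cases hPp : (((p:ℕ)) : ZMod q) = (a : ZMod q)
    · rw [if_pos hPp, if_pos hPp, pow_one]
      rw [mul_comm ((1 - (((p:ℕ)):ℂ) ^ (-s))⁻¹) _, mul_assoc, mul_inv_cancel₀ hw, mul_one]
    · rw [if_neg hPp, if_neg hPp, pow_zero, one_mul, mul_one]
  rw [hgfun] at Hg
  have hfinal : ∑' n : ℕ, f n = riemannZeta s * T := Hg.unique Hmul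
  rw [← hfinal]
  refine tsum_congr fun n => ?_
  rcases eq_or_ne n 0 with rfl | hn
  · simp [hfdef, fHom]
  · rw [if_neg hn]
    simp only [hfdef, fHom, MonoidWithZeroHom.coe_mk, ZeroHom.coe_mk, if_neg hn]
    rw [cpow_neg, div_eq_mul_inv]
    rfl
end
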